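/- Let φ be an AND-OR formula with maximum fan-in l, ∧-depth d_∧, and ∨-depth d_∨, and let P_{G_φ} be its st-connectivity span program with unit edge weights. Then the maximum approximate positive witness size over all inputs satisfies W̃_+(P_{G_φ}) ≤ (1/2)·l^{d_∧}, and the maximum approximate negative witness size satisfies W̃_-(P_{G_φ}) ≤ 2·l^{d_∨}. -/

import Mathlib

open scoped ENNReal

namespace STConn

variable {V E : Type*}

/-- `v` is an endpoint of edge `e`. -/
def Touches (ends : E → V × V) (e : E) (v : V) : Prop :=
  (ends e).1 = v ∨ (ends e).2 = v

/-- Net flow out of vertex `v` for an edge-valued function `θ` (value along the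
fixed orientation of each edge). -/
noncomputable def netflow [Fintype E] [DecidableEq V] (ends : E → V × V) (θ : E → ℝ) (v : V) : ℝ :=
  ∑ e, θ e * ((if (ends e).1 = v then (1:ℝ) else 0) - (if (ends e).2 = v then 1 else 0))

/-- `θ` is a unit `st`-flow: net flow `+1` at `s`, `-1` at `t`, `0` elsewhere. -/
def IsUnitFlow [Fintype E] [DecidableEq V] (ends : E → V × V) (s t : V) (θ : E → ℝ) : Prop :=
  ∀ v, netflow ends θ v = (if v = s then (1:ℝ) else 0) - (if v = t then 1 else 0)

/-- Energy of a flow with respect to edge weights `c`. -/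
noncomputable def energy [Fintype E] (c : E → ℝ) (θ : E → ℝ) : ℝ :=
  ∑ e, θ e ^ 2 / c e

/-- Effective resistance between `s` and `t`, restricted to flows supported on `S`
(taking value `∞` if no unit `st`-flow supported on `S` exists). -/
noncomputable def effResOn [Fintype E] [DecidableEq V] (ends : E → V × V) (c : E → ℝ)
    (S : Set E) (s t : V) : ℝ≥0∞ :=
  ⨅ θ : {θ : E → ℝ // IsUnitFlow ends s t θ ∧ ∀ e ∉ S, θ e = 0},
    ENNReal.ofReal (energy c θ.1)

/-- Effective resistance between `s` and `t` in the network `(ends, c)`. -/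
noncomputable def effRes [Fintype E] [DecidableEq V] (ends : E → V × V) (c : E → ℝ)
    (s t : V) : ℝ≥0∞ :=
  effResOn ends c Set.univ s t

end STConn
namespace STConn

variable {V E : Type*}

/-- Endpoints of a directed edge: `(e, true)` is `e` with its fixed orientation,
`(e, false)` is the reversal. -/
def dend (ends : E → V × V) (p : E × Bool) : V × V :=
  if p.2 then ends p.1 else ((ends p.1).2, (ends p.1).1)

/-- The span program operator `A = ∑ √c(e) (|u⟩-|v⟩)⟨u,v,λ|` of the
`st`-connectivity span program `P_{G,c}`, applied to a vector `w` of the space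
`H` spanned by directed edges; the result lives in the vertex space `U`. -/
noncomputable def Amap [Fintype E] [DecidableEq V] (ends : E → V × V) (c : E → ℝ)
    (w : E × Bool → ℝ) : V → ℝ := fun v =>
  ∑ p : E × Bool, Real.sqrt (c p.1) * w p *
    ((if (dend ends p).1 = v then (1:ℝ) else 0) - (if (dend ends p).2 = v then 1 else 0))

/-- The target vector `τ = |s⟩ - |t⟩`. -/
def tau [DecidableEq V] (s t : V) : V → ℝ := fun v =>
  (if v = s then (1:ℝ) else 0) - (if v = t then 1 else 0)

/-- A unit `st`-flow presented as an antisymmetric function on directed edges. -/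
def IsUnitFlowD [Fintype E] [DecidableEq V] (ends : E → V × V) (s t : V)
    (θ : E × Bool → ℝ) : Prop :=
  (∀ p : E × Bool, θ (p.1, !p.2) = -θ p) ∧
  ∀ v, (∑ p : E × Bool, θ p * (if (dend ends p).1 = v then (1:ℝ) else 0)) = tau s t v

end STConn

namespace STConn

/-- Read-once AND-OR formulas on `N` variables (gates have fan-in `k+1`). -/
inductive Formula (N : ℕ) : Type where
  | var : Fin N → Formula N
  | and : (k : ℕ) → (Fin (k + 1) → Formula N) → Formula N
  | or : (k : ℕ) → (Fin (k + 1) → Formula N) → Formula N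

namespace Formula

variable {N : ℕ}

/-- Evaluation of a formula on an input. -/
def eval : Formula N → (Fin N → Bool) → Bool
  | .var i, x => x i
  | .and _ fs, x => (List.finRange _).all fun i => (fs i).eval x
  | .or _ fs, x => (List.finRange _).any fun i => (fs i).eval x

/-- The leaves of a formula; these index the edges of the graph `G_φ`. -/
def Leaves : Formula N → Type
  | .var _ => Unit
  | .and k fs => Σ i : Fin (k + 1), (fs i).Leaves
  | .or k fs => Σ i : Fin (k + 1), (fs i).Leaves

/-- The variable labelling a leaf. -/
def label : (φ : Formula N) → φ.Leaves → Fin N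
  | .var i, _ => i
  | .and _ fs, ⟨i, l⟩ => (fs i).label l
  | .or _ fs, ⟨i, l⟩ => (fs i).label l

/-- The internal (non-terminal) vertices of the series-parallel graph `G_φ`:
series composition (for `∧`) introduces `k` junction vertices. -/
def Inner : Formula N → Type
  | .var _ => Empty
  | .and k fs => (Σ i : Fin (k + 1), (fs i).Inner) ⊕ Fin k
  | .or k fs => Σ i : Fin (k + 1), (fs i).Inner

/-- The vertex set of `G_φ`: internal vertices plus the two terminals
(`Sum.inr true = s`, `Sum.inr false = t`). -/
abbrev Vert (φ : Formula N) : Type := φ.Inner ⊕ Bool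

/-- Embedding the vertices of the `i`-th subgraph into a series composition. -/
def vmapAnd (k : ℕ) (fs : Fin (k + 1) → Formula N) (i : Fin (k + 1)) :
    (fs i).Vert → (Formula.and k fs).Vert
  | .inl w => .inl (.inl ⟨i, w⟩)
  | .inr true =>
      if h : i.val = 0 then .inr true
      else .inl (.inr ⟨i.val - 1, by have := i.isLt; omega⟩)
  | .inr false =>
      if h : i.val = k then .inr false
      else .inl (.inr ⟨i.val, by have := i.isLt; omega⟩)

/-- Embedding the vertices of the `i`-th subgraph into a parallel composition. -/
def vmapOr (k : ℕ) (fs : Fin (k + 1) → Formula N) (i : Fin (k + 1)) :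
    (fs i).Vert → (Formula.or k fs).Vert
  | .inl w => .inl ⟨i, w⟩
  | .inr b => .inr b

/-- The endpoints of each edge (= leaf) of the series-parallel graph `G_φ`:
a variable is a single `st`-edge, `∧` composes the subgraphs in series, and
`∨` composes them in parallel. -/
def ends : (φ : Formula N) → φ.Leaves → φ.Vert × φ.Vert
  | .var _, _ => (.inr true, .inr false)
  | .and k fs, ⟨i, l⟩ =>
      (vmapAnd k fs i ((fs i).ends l).1, vmapAnd k fs i ((fs i).ends l).2)
  | .or k fs, ⟨i, l⟩ =>
      (vmapOr k fs i ((fs i).ends l).1, vmapOr k fs i ((fs i).ends l).2)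

/-- The dual formula: swap every `∧` with `∨`. -/
def dualF : Formula N → Formula N
  | .var i => .var i
  | .and k fs => .or k fun i => dualF (fs i)
  | .or k fs => .and k fun i => dualF (fs i)

def leavesFintype : (φ : Formula N) → Fintype φ.Leaves
  | .var _ => inferInstanceAs (Fintype Unit)
  | .and k fs =>
      letI := fun i => leavesFintype (fs i)
      inferInstanceAs (Fintype (Σ i : Fin (k + 1), (fs i).Leaves))
  | .or k fs =>
      letI := fun i => leavesFintype (fs i)
      inferInstanceAs (Fintype (Σ i : Fin (k + 1), (fs i).Leaves))

instance (φ : Formula N) : Fintype φ.Leaves := leavesFintype φ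

def innerDecEq : (φ : Formula N) → DecidableEq φ.Inner
  | .var _ => fun a => a.elim
  | .and k fs =>
      letI := fun i => innerDecEq (fs i)
      inferInstanceAs (DecidableEq ((Σ i : Fin (k + 1), (fs i).Inner) ⊕ Fin k))
  | .or k fs =>
      letI := fun i => innerDecEq (fs i)
      inferInstanceAs (DecidableEq (Σ i : Fin (k + 1), (fs i).Inner))

instance (φ : Formula N) : DecidableEq φ.Inner := innerDecEq φ

instance (φ : Formula N) : DecidableEq φ.Vert :=
  inferInstanceAs (DecidableEq (φ.Inner ⊕ Bool))

/-- The source terminal `s` of `G_φ`. -/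
def src (φ : Formula N) : φ.Vert := .inr true

/-- The sink terminal `t` of `G_φ`. -/
def snk (φ : Formula N) : φ.Vert := .inr false

end Formula
end STConn
namespace STConn
namespace Formula

variable {N : ℕ}

/-- The `∧`-depth: the largest number of `∧`-nodes on a root-to-leaf path. -/
def andDepth : Formula N → ℕ
  | .var _ => 0
  | .and _ fs => (Finset.univ.sup fun i => (fs i).andDepth) + 1
  | .or _ fs => Finset.univ.sup fun i => (fs i).andDepth

/-- The `∨`-depth: the largest number of `∨`-nodes on a root-to-leaf path. -/
def orDepth : Formula N → ℕ
  | .var _ => 0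
  | .and _ fs => Finset.univ.sup fun i => (fs i).orDepth
  | .or _ fs => (Finset.univ.sup fun i => (fs i).orDepth) + 1

/-- Every gate of the formula has fan-in at most `l`. -/
def FanInLe (l : ℕ) : Formula N → Prop
  | .var _ => True
  | .and k fs => k + 1 ≤ l ∧ ∀ i, FanInLe l (fs i)
  | .or k fs => k + 1 ≤ l ∧ ∀ i, FanInLe l (fs i)

end Formula
end STConn

namespace STConn
namespace Formula

variable {N : ℕ}

/-- The minimal positive error `e₊(x) = min {‖Π_{H(x)^⊥} w‖² : A w = τ}` for the
unit-weight `st`-connectivity span program on `G_φ`. -/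
noncomputable def apPosErr (φ : Formula N) (x : Fin N → Bool) : ℝ≥0∞ :=
  ⨅ w : {w : φ.Leaves × Bool → ℝ //
      Amap φ.ends (fun _ => (1 : ℝ)) w = tau φ.src φ.snk},
    ENNReal.ofReal (∑ p : φ.Leaves × Bool,
      if x (φ.label p.1) = false then (w.1 p) ^ 2 else 0)

/-- The approximate positive witness size `w̃₊(x)`: the minimal `‖w‖²` over
vectors `w` with `A w = τ` achieving the minimal error `e₊(x)`. -/
noncomputable def apPosSize (φ : Formula N) (x : Fin N → Bool) : ℝ≥0∞ :=
  ⨅ w : {w : φ.Leaves × Bool → ℝ //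
      Amap φ.ends (fun _ => (1 : ℝ)) w = tau φ.src φ.snk ∧
      ENNReal.ofReal (∑ p : φ.Leaves × Bool,
        if x (φ.label p.1) = false then (w p) ^ 2 else 0) = φ.apPosErr x},
    ENNReal.ofReal (∑ p : φ.Leaves × Bool, (w.1 p) ^ 2)

/-- The minimal negative error `e₋(x) = min {‖ωAΠ_{H(x)}‖² : ωτ = 1}` for the
unit-weight `st`-connectivity span program on `G_φ`. -/
noncomputable def apNegErr (φ : Formula N) (x : Fin N → Bool) : ℝ≥0∞ :=
  ⨅ ω : {ω : φ.Vert → ℝ // ω φ.src - ω φ.snk = 1},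
    ENNReal.ofReal (∑ p : φ.Leaves × Bool,
      if x (φ.label p.1) = true then
        (ω.1 (dend φ.ends p).1 - ω.1 (dend φ.ends p).2) ^ 2 else 0)

/-- The approximate negative witness size `w̃₋(x)`: the minimal `‖ωA‖²` over
functionals `ω` with `ωτ = 1` achieving the minimal error `e₋(x)`. -/
noncomputable def apNegSize (φ : Formula N) (x : Fin N → Bool) : ℝ≥0∞ :=
  ⨅ ω : {ω : φ.Vert → ℝ // ω φ.src - ω φ.snk = 1 ∧
      ENNReal.ofReal (∑ p : φ.Leaves × Bool,
        if x (φ.label p.1) = true then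
          (ω (dend φ.ends p).1 - ω (dend φ.ends p).2) ^ 2 else 0) = φ.apNegErr x},
    ENNReal.ofReal (∑ p : φ.Leaves × Bool,
      (ω.1 (dend φ.ends p).1 - ω.1 (dend φ.ends p).2) ^ 2)

end Formula
end STConn

namespace STConn

open Finset

variable {V W E' : Type*}

lemma sum_prod_bool {α M : Type*} [Fintype α] [AddCommMonoid M] (f : α × Bool → M) :
    ∑ p : α × Bool, f p = ∑ e, (f (e, true) + f (e, false)) := by
  rw [Fintype.sum_prod_type]
  exact Finset.sum_congr rfl fun e _ => Fintype.sum_bool _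

lemma flow_pairing [Fintype E'] [Fintype V] [DecidableEq V]
    (ends : E' → V × V) (s t : V) (θ : E' → ℝ)
    (h : ∀ w, ∑ e, θ e * ((if (ends e).1 = w then (1:ℝ) else 0)
        - (if (ends e).2 = w then 1 else 0)) = tau s t w)
    (g : V → ℝ) :
    ∑ e, θ e * (g (ends e).1 - g (ends e).2) = g s - g t := by
  have hg : ∀ a : V, g a = ∑ w : V, (if a = w then (1:ℝ) else 0) * g w := by
    intro a
    simp [ite_mul]
  have step1 : ∀ e, θ e * (g (ends e).1 - g (ends e).2)
      = ∑ w : V, θ e * ((if (ends e).1 = w then (1:ℝ) else 0)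
          - (if (ends e).2 = w then 1 else 0)) * g w := by
    intro e
    rw [hg (ends e).1, hg (ends e).2, ← Finset.sum_sub_distrib, Finset.mul_sum]
    exact Finset.sum_congr rfl fun w _ => by ring
  calc ∑ e, θ e * (g (ends e).1 - g (ends e).2)
      = ∑ e, ∑ w : V, θ e * ((if (ends e).1 = w then (1:ℝ) else 0)
          - (if (ends e).2 = w then 1 else 0)) * g w :=
        Finset.sum_congr rfl fun e _ => step1 e
    _ = ∑ w : V, (∑ e, θ e * ((if (ends e).1 = w then (1:ℝ) else 0)
          - (if (ends e).2 = w then 1 else 0))) * g w := by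
        rw [Finset.sum_comm]
        exact Finset.sum_congr rfl fun w _ => (Finset.sum_mul _ _ _).symm
    _ = ∑ w : V, tau s t w * g w := Finset.sum_congr rfl fun w _ => by rw [h w]
    _ = g s - g t := by
        simp only [tau, sub_mul, ite_mul, one_mul, zero_mul]
        rw [Finset.sum_sub_distrib]
        simp

lemma flow_map [Fintype E'] [Fintype V] [DecidableEq V] [DecidableEq W]
    (ends : E' → V × V) (s t : V) (θ : E' → ℝ)
    (h : ∀ w, ∑ e, θ e * ((if (ends e).1 = w then (1:ℝ) else 0)
        - (if (ends e).2 = w then 1 else 0)) = tau s t w)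
    (f : V → W) (v : W) :
    ∑ e, θ e * ((if f (ends e).1 = v then (1:ℝ) else 0)
        - (if f (ends e).2 = v then 1 else 0))
      = (if f s = v then (1:ℝ) else 0) - (if f t = v then 1 else 0) :=
  flow_pairing ends s t θ h (fun w => if f w = v then 1 else 0)

/-- The antisymmetric directed extension of an (undirected) flow, halved. -/
noncomputable def wof {α : Type*} (θ : α → ℝ) : α × Bool → ℝ := fun p =>
  if p.2 then θ p.1 / 2 else -(θ p.1 / 2)

namespace Formula

variable {N : ℕ}

def innerFintypeAux : (φ : Formula N) → Fintype φ.Inner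
  | .var _ => inferInstanceAs (Fintype Empty)
  | .and k fs =>
      letI := fun i => innerFintypeAux (fs i)
      inferInstanceAs (Fintype ((Σ i : Fin (k + 1), (fs i).Inner) ⊕ Fin k))
  | .or k fs =>
      letI := fun i => innerFintypeAux (fs i)
      inferInstanceAs (Fintype (Σ i : Fin (k + 1), (fs i).Inner))

instance (φ : Formula N) : Fintype φ.Inner := innerFintypeAux φ

instance (φ : Formula N) : Fintype φ.Vert :=
  inferInstanceAs (Fintype (φ.Inner ⊕ Bool))

/-- Positive-case witness data for the span program of `G_φ`. -/
structure PData (l : ℕ) (φ : Formula N) (x : Fin N → Bool) : Type where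
  θ : φ.Leaves → ℝ
  ω : φ.Vert → ℝ
  E : ℝ
  hE : E = ∑ e, θ e ^ 2
  hEpos : 0 < E
  hflow : ∀ v, ∑ e, θ e * ((if (φ.ends e).1 = v then (1:ℝ) else 0)
      - (if (φ.ends e).2 = v then 1 else 0)) = tau φ.src φ.snk v
  hsupp : ∀ e, x (φ.label e) = false → θ e = 0
  hωs : ω φ.src = 1
  hωt : ω φ.snk = 0
  hcomp : ∀ e, x (φ.label e) = true →
      ω (φ.ends e).1 - ω (φ.ends e).2 = θ e / E
  hEle : E ≤ (l : ℝ) ^ φ.andDepth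
  hFle : ∑ e, (ω (φ.ends e).1 - ω (φ.ends e).2) ^ 2 ≤ (l : ℝ) ^ φ.orDepth

/-- Negative-case witness data for the span program of `G_φ`. -/
structure NData (l : ℕ) (φ : Formula N) (x : Fin N → Bool) : Type where
  θ : φ.Leaves → ℝ
  ω : φ.Vert → ℝ
  D : ℝ
  hD : D = ∑ e, (ω (φ.ends e).1 - ω (φ.ends e).2) ^ 2
  hDpos : 0 < D
  hflow : ∀ v, ∑ e, θ e * ((if (φ.ends e).1 = v then (1:ℝ) else 0)
      - (if (φ.ends e).2 = v then 1 else 0)) = tau φ.src φ.snk v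
  hgood : ∀ e, x (φ.label e) = true → ω (φ.ends e).1 - ω (φ.ends e).2 = 0
  hωs : ω φ.src = 1
  hωt : ω φ.snk = 0
  hbad : ∀ e, x (φ.label e) = false →
      θ e = (ω (φ.ends e).1 - ω (φ.ends e).2) / D
  hDle : D ≤ (l : ℝ) ^ φ.orDepth
  hTle : ∑ e, θ e ^ 2 ≤ (l : ℝ) ^ φ.andDepth

lemma amap_wof (φ : Formula N) (θ : φ.Leaves → ℝ) (v : φ.Vert) :
    Amap φ.ends (fun _ => (1:ℝ)) (wof θ) v
      = ∑ e, θ e * ((if (φ.ends e).1 = v then (1:ℝ) else 0)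
          - (if (φ.ends e).2 = v then 1 else 0)) := by
  unfold Amap
  rw [sum_prod_bool]
  refine Finset.sum_congr rfl fun e _ => ?_
  simp only [wof, dend, Real.sqrt_one]
  norm_num
  ring

lemma amap_pairing (φ : Formula N) (w : φ.Leaves × Bool → ℝ) (ω : φ.Vert → ℝ)
    (h : Amap φ.ends (fun _ => (1:ℝ)) w = tau φ.src φ.snk) :
    ∑ p : φ.Leaves × Bool, w p * (ω (dend φ.ends p).1 - ω (dend φ.ends p).2)
      = ω φ.src - ω φ.snk := by
  have hg : ∀ a : φ.Vert, ω a = ∑ u : φ.Vert, (if a = u then (1:ℝ) else 0) * ω u := by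
    intro a; simp [ite_mul]
  calc ∑ p : φ.Leaves × Bool, w p * (ω (dend φ.ends p).1 - ω (dend φ.ends p).2)
      = ∑ p : φ.Leaves × Bool, ∑ u : φ.Vert,
          (Real.sqrt 1 * w p * ((if (dend φ.ends p).1 = u then (1:ℝ) else 0)
            - (if (dend φ.ends p).2 = u then 1 else 0))) * ω u := by
        refine Finset.sum_congr rfl fun p _ => ?_
        rw [hg (dend φ.ends p).1, hg (dend φ.ends p).2, ← Finset.sum_sub_distrib,
          Finset.mul_sum]
        refine Finset.sum_congr rfl fun u _ => ?_
        rw [Real.sqrt_one]; ring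
    _ = ∑ u : φ.Vert, (Amap φ.ends (fun _ => (1:ℝ)) w u) * ω u := by
        rw [Finset.sum_comm]
        refine Finset.sum_congr rfl fun u _ => ?_
        rw [Amap, Finset.sum_mul]
    _ = ∑ u : φ.Vert, tau φ.src φ.snk u * ω u := by rw [h]
    _ = ω φ.src - ω φ.snk := by
        simp only [tau, sub_mul, ite_mul, one_mul, zero_mul]
        rw [Finset.sum_sub_distrib]
        simp

end Formula
end STConn
namespace STConn
namespace Formula

open Finset

variable {N : ℕ} {l : ℕ}

lemma dend_true (φ : Formula N) (e : φ.Leaves) : dend φ.ends (e, true) = φ.ends e := rfl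

lemma dend_false (φ : Formula N) (e : φ.Leaves) :
    dend φ.ends (e, false) = ((φ.ends e).2, (φ.ends e).1) := rfl

lemma dsum_if (φ : Formula N) (ω : φ.Vert → ℝ) (x : Fin N → Bool) (b : Bool) :
    ∑ p : φ.Leaves × Bool,
        (if x (φ.label p.1) = b then (ω (dend φ.ends p).1 - ω (dend φ.ends p).2) ^ 2 else 0)
      = 2 * ∑ e, (if x (φ.label e) = b then (ω (φ.ends e).1 - ω (φ.ends e).2) ^ 2 else 0) := by
  rw [sum_prod_bool, Finset.mul_sum]
  refine Finset.sum_congr rfl fun e _ => ?_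
  by_cases h : x (φ.label e) = b
  · rw [if_pos h, if_pos h, if_pos h, dend_true, dend_false]; ring
  · rw [if_neg h, if_neg h, if_neg h]; ring

lemma dsum_all (φ : Formula N) (ω : φ.Vert → ℝ) :
    ∑ p : φ.Leaves × Bool, (ω (dend φ.ends p).1 - ω (dend φ.ends p).2) ^ 2
      = 2 * ∑ e, (ω (φ.ends e).1 - ω (φ.ends e).2) ^ 2 := by
  rw [sum_prod_bool, Finset.mul_sum]
  refine Finset.sum_congr rfl fun e _ => ?_
  rw [dend_true, dend_false]; ring

lemma wof_sq_if (φ : Formula N) (θ : φ.Leaves → ℝ) (x : Fin N → Bool) (b : Bool) :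
    ∑ p : φ.Leaves × Bool, (if x (φ.label p.1) = b then (wof θ p) ^ 2 else 0)
      = (∑ e, if x (φ.label e) = b then θ e ^ 2 else 0) / 2 := by
  rw [sum_prod_bool, Finset.sum_div]
  refine Finset.sum_congr rfl fun e _ => ?_
  by_cases h : x (φ.label e) = b
  · rw [if_pos h, if_pos h, if_pos h]; simp [wof]; ring
  · rw [if_neg h, if_neg h, if_neg h]; ring

lemma wof_sq_all (φ : Formula N) (θ : φ.Leaves → ℝ) :
    ∑ p : φ.Leaves × Bool, (wof θ p) ^ 2 = (∑ e, θ e ^ 2) / 2 := by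
  rw [sum_prod_bool, Finset.sum_div]
  refine Finset.sum_congr rfl fun e _ => ?_
  simp [wof]; ring

lemma posCase_bounds (φ : Formula N) (x : Fin N → Bool) (P : PData l φ x) :
    apPosSize φ x ≤ ENNReal.ofReal (P.E / 2) ∧
    apNegSize φ x ≤ ENNReal.ofReal
      (2 * ∑ e, (P.ω (φ.ends e).1 - P.ω (φ.ends e).2) ^ 2) := by
  have hA : Amap φ.ends (fun _ => (1:ℝ)) (wof P.θ) = tau φ.src φ.snk :=
    funext fun v => (amap_wof φ P.θ v).trans (P.hflow v)
  have herr0 : (∑ p : φ.Leaves × Bool,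
      if x (φ.label p.1) = false then (wof P.θ p) ^ 2 else 0) = 0 := by
    rw [wof_sq_if]
    rw [Finset.sum_eq_zero, zero_div]
    intro e _
    by_cases h : x (φ.label e) = false
    · rw [if_pos h, P.hsupp e h]; ring
    · rw [if_neg h]
  have hPosErr : apPosErr φ x = 0 := by
    refine le_antisymm ?_ zero_le
    refine iInf_le_of_le ⟨wof P.θ, hA⟩ ?_
    rw [herr0, ENNReal.ofReal_zero]
  constructor
  · refine le_trans (iInf_le _ ⟨wof P.θ, hA, by rw [herr0, ENNReal.ofReal_zero, hPosErr]⟩) ?_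
    rw [wof_sq_all, P.hE]
  · -- negative witness side
    have hgsum : (∑ e, if x (φ.label e) = true then P.θ e ^ 2 else 0) = P.E := by
      rw [P.hE]
      refine Finset.sum_congr rfl fun e _ => ?_
      by_cases h : x (φ.label e) = true
      · rw [if_pos h]
      · rw [if_neg h, P.hsupp e (by simpa using h)]; ring
    have lb : ∀ ω' : φ.Vert → ℝ, ω' φ.src - ω' φ.snk = 1 →
        2 / P.E ≤ ∑ p : φ.Leaves × Bool,
          (if x (φ.label p.1) = true then
            (ω' (dend φ.ends p).1 - ω' (dend φ.ends p).2) ^ 2 else 0) := by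
      intro ω' hdrop
      rw [dsum_if]
      set G := ∑ e, (if x (φ.label e) = true then
        (ω' (φ.ends e).1 - ω' (φ.ends e).2) ^ 2 else 0) with hG
      have h1 : ∑ e, P.θ e * (ω' (φ.ends e).1 - ω' (φ.ends e).2) = 1 := by
        rw [flow_pairing φ.ends φ.src φ.snk P.θ P.hflow ω', hdrop]
      have h2 : ∑ e, (if x (φ.label e) = true then P.θ e else 0)
          * (if x (φ.label e) = true then (ω' (φ.ends e).1 - ω' (φ.ends e).2) else 0) = 1 := by
        rw [← h1]
        refine Finset.sum_congr rfl fun e _ => ?_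
        by_cases h : x (φ.label e) = true
        · rw [if_pos h, if_pos h]
        · rw [if_neg h, if_neg h, P.hsupp e (by simpa using h)]; ring
      have hCS := Finset.sum_mul_sq_le_sq_mul_sq Finset.univ
        (fun e => if x (φ.label e) = true then P.θ e else 0)
        (fun e => if x (φ.label e) = true then (ω' (φ.ends e).1 - ω' (φ.ends e).2) else 0)
      rw [h2] at hCS
      have hf2 : ∑ e, (if x (φ.label e) = true then P.θ e else 0) ^ 2 = P.E := by
        rw [← hgsum]
        refine Finset.sum_congr rfl fun e _ => ?_
        by_cases h : x (φ.label e) = true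
        · rw [if_pos h, if_pos h]
        · rw [if_neg h, if_neg h]; ring
      have hg2 : ∑ e, (if x (φ.label e) = true then
          (ω' (φ.ends e).1 - ω' (φ.ends e).2) else 0) ^ 2 = G := by
        rw [hG]
        refine Finset.sum_congr rfl fun e _ => ?_
        by_cases h : x (φ.label e) = true
        · rw [if_pos h, if_pos h]
        · rw [if_neg h, if_neg h]; ring
      rw [hf2, hg2, one_pow] at hCS
      rw [div_le_iff₀ P.hEpos]
      nlinarith
    have herrω : (∑ p : φ.Leaves × Bool,
        (if x (φ.label p.1) = true then
          (P.ω (dend φ.ends p).1 - P.ω (dend φ.ends p).2) ^ 2 else 0)) = 2 / P.E := by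
      rw [dsum_if]
      have : (∑ e, if x (φ.label e) = true then
          (P.ω (φ.ends e).1 - P.ω (φ.ends e).2) ^ 2 else 0) = 1 / P.E := by
        have : (∑ e, if x (φ.label e) = true then
            (P.ω (φ.ends e).1 - P.ω (φ.ends e).2) ^ 2 else 0)
            = (∑ e, if x (φ.label e) = true then P.θ e ^ 2 else 0) / P.E ^ 2 := by
          rw [Finset.sum_div]
          refine Finset.sum_congr rfl fun e _ => ?_
          by_cases h : x (φ.label e) = true
          · rw [if_pos h, if_pos h, P.hcomp e h]
            rw [div_pow]
          · rw [if_neg h, if_neg h, zero_div]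
        rw [this, hgsum, pow_two, ← div_div, div_self (ne_of_gt P.hEpos)]
      rw [this]; ring
    have hdropω : P.ω φ.src - P.ω φ.snk = 1 := by rw [P.hωs, P.hωt]; ring
    have hNegErr : apNegErr φ x = ENNReal.ofReal (2 / P.E) := by
      refine le_antisymm ?_ ?_
      · exact iInf_le_of_le ⟨P.ω, hdropω⟩ (by rw [herrω])
      · exact le_iInf fun ω' => ENNReal.ofReal_le_ofReal (lb ω'.1 ω'.2)
    refine le_trans (iInf_le _ ⟨P.ω, hdropω, by rw [herrω, hNegErr]⟩) ?_
    rw [dsum_all]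

lemma negCase_bounds (φ : Formula N) (x : Fin N → Bool) (Nd : NData l φ x) :
    apPosSize φ x ≤ ENNReal.ofReal ((∑ e, Nd.θ e ^ 2) / 2) ∧
    apNegSize φ x ≤ ENNReal.ofReal (2 * Nd.D) := by
  have hdropω : Nd.ω φ.src - Nd.ω φ.snk = 1 := by rw [Nd.hωs, Nd.hωt]; ring
  have hbsum : (∑ e, if x (φ.label e) = false then
      (Nd.ω (φ.ends e).1 - Nd.ω (φ.ends e).2) ^ 2 else 0) = Nd.D := by
    rw [Nd.hD]
    refine Finset.sum_congr rfl fun e _ => ?_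
    by_cases h : x (φ.label e) = false
    · rw [if_pos h]
    · rw [if_neg h, Nd.hgood e (by simpa using h)]; ring
  constructor
  · -- positive approximate witness side
    have hA : Amap φ.ends (fun _ => (1:ℝ)) (wof Nd.θ) = tau φ.src φ.snk :=
      funext fun v => (amap_wof φ Nd.θ v).trans (Nd.hflow v)
    have herrw : (∑ p : φ.Leaves × Bool,
        if x (φ.label p.1) = false then (wof Nd.θ p) ^ 2 else 0) = 1 / (2 * Nd.D) := by
      rw [wof_sq_if]
      have : (∑ e, if x (φ.label e) = false then Nd.θ e ^ 2 else 0) = 1 / Nd.D := by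
        have h1 : (∑ e, if x (φ.label e) = false then Nd.θ e ^ 2 else 0)
            = (∑ e, if x (φ.label e) = false then
                (Nd.ω (φ.ends e).1 - Nd.ω (φ.ends e).2) ^ 2 else 0) / Nd.D ^ 2 := by
          rw [Finset.sum_div]
          refine Finset.sum_congr rfl fun e _ => ?_
          by_cases h : x (φ.label e) = false
          · rw [if_pos h, if_pos h, Nd.hbad e h, div_pow]
          · rw [if_neg h, if_neg h, zero_div]
        rw [h1, hbsum, pow_two, ← div_div, div_self (ne_of_gt Nd.hDpos)]
      rw [this, div_div, mul_comm]
    have lb : ∀ w' : φ.Leaves × Bool → ℝ,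
        Amap φ.ends (fun _ => (1:ℝ)) w' = tau φ.src φ.snk →
        1 / (2 * Nd.D) ≤ ∑ p : φ.Leaves × Bool,
          (if x (φ.label p.1) = false then w' p ^ 2 else 0) := by
      intro w' hA'
      have h1 : ∑ p : φ.Leaves × Bool,
          w' p * (Nd.ω (dend φ.ends p).1 - Nd.ω (dend φ.ends p).2) = 1 := by
        rw [amap_pairing φ w' Nd.ω hA', hdropω]
      have hgood' : ∀ p : φ.Leaves × Bool, x (φ.label p.1) = true →
          Nd.ω (dend φ.ends p).1 - Nd.ω (dend φ.ends p).2 = 0 := by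
        rintro ⟨e, b⟩ h
        cases b
        · rw [dend_false]
          have := Nd.hgood e h
          simp only []
          linarith [Nd.hgood e h]
        · rw [dend_true]; exact Nd.hgood e h
      have h2 : ∑ p : φ.Leaves × Bool,
          (if x (φ.label p.1) = false then w' p else 0)
          * (if x (φ.label p.1) = false then
              (Nd.ω (dend φ.ends p).1 - Nd.ω (dend φ.ends p).2) else 0) = 1 := by
        rw [← h1]
        refine Finset.sum_congr rfl fun p _ => ?_
        by_cases h : x (φ.label p.1) = false
        · rw [if_pos h, if_pos h]
        · rw [if_neg h, if_neg h, hgood' p (by simpa using h)]; ring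
      have hCS := Finset.sum_mul_sq_le_sq_mul_sq Finset.univ
        (fun p : φ.Leaves × Bool => if x (φ.label p.1) = false then w' p else 0)
        (fun p : φ.Leaves × Bool => if x (φ.label p.1) = false then
          (Nd.ω (dend φ.ends p).1 - Nd.ω (dend φ.ends p).2) else 0)
      rw [h2, one_pow] at hCS
      have hg2 : ∑ p : φ.Leaves × Bool,
          (if x (φ.label p.1) = false then
            (Nd.ω (dend φ.ends p).1 - Nd.ω (dend φ.ends p).2) else 0) ^ 2 = 2 * Nd.D := by
        have : ∀ p : φ.Leaves × Bool,
            (if x (φ.label p.1) = false then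
              (Nd.ω (dend φ.ends p).1 - Nd.ω (dend φ.ends p).2) else 0) ^ 2
            = (if x (φ.label p.1) = false then
              (Nd.ω (dend φ.ends p).1 - Nd.ω (dend φ.ends p).2) ^ 2 else 0) := by
          intro p
          by_cases h : x (φ.label p.1) = false
          · rw [if_pos h, if_pos h]
          · rw [if_neg h, if_neg h]; ring
        rw [Finset.sum_congr rfl fun p _ => this p, dsum_if, hbsum]
      have hf2 : ∑ p : φ.Leaves × Bool,
          (if x (φ.label p.1) = false then w' p else 0) ^ 2
          = ∑ p : φ.Leaves × Bool, (if x (φ.label p.1) = false then w' p ^ 2 else 0) := by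
        refine Finset.sum_congr rfl fun p _ => ?_
        by_cases h : x (φ.label p.1) = false
        · rw [if_pos h, if_pos h]
        · rw [if_neg h, if_neg h]; ring
      rw [hf2, hg2] at hCS
      rw [div_le_iff₀ (by have := Nd.hDpos; positivity)]
      nlinarith
    have hPosErr : apPosErr φ x = ENNReal.ofReal (1 / (2 * Nd.D)) := by
      refine le_antisymm ?_ ?_
      · exact iInf_le_of_le ⟨wof Nd.θ, hA⟩ (by rw [herrw])
      · exact le_iInf fun w' => ENNReal.ofReal_le_ofReal (lb w'.1 w'.2)
    refine le_trans (iInf_le _ ⟨wof Nd.θ, hA, by rw [herrw, hPosErr]⟩) ?_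
    rw [wof_sq_all]
  · -- negative witness side: exact witness
    have herr0 : (∑ p : φ.Leaves × Bool,
        if x (φ.label p.1) = true then
          (Nd.ω (dend φ.ends p).1 - Nd.ω (dend φ.ends p).2) ^ 2 else 0) = 0 := by
      rw [dsum_if]
      rw [Finset.sum_eq_zero, mul_zero]
      intro e _
      by_cases h : x (φ.label e) = true
      · rw [if_pos h, Nd.hgood e h]; ring
      · rw [if_neg h]
    have hNegErr : apNegErr φ x = 0 := by
      refine le_antisymm ?_ zero_le
      exact iInf_le_of_le ⟨Nd.ω, hdropω⟩ (by rw [herr0, ENNReal.ofReal_zero])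
    refine le_trans (iInf_le _ ⟨Nd.ω, hdropω, by rw [herr0, ENNReal.ofReal_zero, hNegErr]⟩) ?_
    rw [dsum_all, ← Nd.hD]

end Formula
end STConn
namespace STConn
namespace Formula

open Finset

variable {N : ℕ}

lemma ind_comm {α : Type*} [DecidableEq α] (u w : α) :
    (if u = w then (1:ℝ) else 0) = if w = u then 1 else 0 := by
  by_cases h : u = w
  · rw [if_pos h, if_pos h.symm]
  · rw [if_neg h, if_neg fun hh => h hh.symm]

lemma sum_leaves_and {M : Type*} [AddCommMonoid M] (k : ℕ) (fs : Fin (k + 1) → Formula N)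
    (f : (Formula.and k fs).Leaves → M) :
    ∑ e, f e = ∑ i, ∑ e : (fs i).Leaves, f ⟨i, e⟩ := by
  show ∑ e ∈ (Finset.univ : Finset (Σ i : Fin (k + 1), (fs i).Leaves)), f e = _
  rw [← Finset.univ_sigma_univ]
  exact Finset.sum_sigma _ _ _

lemma sum_leaves_or {M : Type*} [AddCommMonoid M] (k : ℕ) (fs : Fin (k + 1) → Formula N)
    (f : (Formula.or k fs).Leaves → M) :
    ∑ e, f e = ∑ i, ∑ e : (fs i).Leaves, f ⟨i, e⟩ := by
  show ∑ e ∈ (Finset.univ : Finset (Σ i : Fin (k + 1), (fs i).Leaves)), f e = _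
  rw [← Finset.univ_sigma_univ]
  exact Finset.sum_sigma _ _ _

section AndGlue

variable (k : ℕ) (fs : Fin (k + 1) → Formula N)

/-- Partial sums of the potential-drop coefficients. -/
noncomputable def osum (a : Fin (k + 1) → ℝ) (n : ℕ) : ℝ :=
  ∑ j : Fin (k + 1), if n ≤ j.val then a j else 0

lemma osum_zero (a : Fin (k + 1) → ℝ) : osum k a 0 = ∑ j, a j := by
  refine Finset.sum_congr rfl fun j _ => if_pos (Nat.zero_le _)

lemma osum_last (a : Fin (k + 1) → ℝ) : osum k a (k + 1) = 0 :=
  Finset.sum_eq_zero fun j _ => if_neg (by have := j.isLt; omega)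

lemma osum_step (a : Fin (k + 1) → ℝ) (n : ℕ) (h : n < k + 1) :
    osum k a n = a ⟨n, h⟩ + osum k a (n + 1) := by
  have ha : a ⟨n, h⟩ = ∑ j : Fin (k + 1), if j = ⟨n, h⟩ then a j else 0 := by
    rw [Finset.sum_ite_eq' Finset.univ (⟨n, h⟩ : Fin (k + 1)) a,
      if_pos (Finset.mem_univ _)]
  rw [ha, osum, osum, ← Finset.sum_add_distrib]
  refine Finset.sum_congr rfl fun j _ => ?_
  by_cases h1 : j.val = n
  · have hj : j = ⟨n, h⟩ := Fin.ext h1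
    rw [if_pos hj, if_pos (show n ≤ j.val by omega),
      if_neg (show ¬(n + 1 ≤ j.val) by omega), add_zero]
  · rw [if_neg (show ¬(j = ⟨n, h⟩) from fun hh => h1 (by rw [hh]))]
    by_cases h2 : n ≤ j.val
    · rw [if_pos h2, if_pos (show n + 1 ≤ j.val by omega), zero_add]
    · rw [if_neg h2, if_neg (show ¬(n + 1 ≤ j.val) by omega), zero_add]

/-- Glued potential for the series composition. -/
noncomputable def andOmega (a : Fin (k + 1) → ℝ) (ωs : ∀ i, (fs i).Vert → ℝ) :
    (Formula.and k fs).Vert → ℝ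
  | .inl (.inl ⟨i, w⟩) => a i * ωs i (.inl w) + osum k a (i.val + 1)
  | .inl (.inr j) => osum k a (j.val + 1)
  | .inr true => 1
  | .inr false => 0

lemma andOmega_vmap (a : Fin (k + 1) → ℝ) (ωs : ∀ i, (fs i).Vert → ℝ)
    (hsum : ∑ i, a i = 1)
    (hs : ∀ i, ωs i (fs i).src = 1) (ht : ∀ i, ωs i (fs i).snk = 0)
    (i : Fin (k + 1)) (w : (fs i).Vert) :
    andOmega k fs a ωs (vmapAnd k fs i w) = a i * ωs i w + osum k a (i.val + 1) := by
  match w with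
  | .inl w => rfl
  | .inr true =>
    have hsrc : ωs i (Sum.inr true) = 1 := hs i
    show andOmega k fs a ωs (vmapAnd k fs i (Sum.inr true)) = _
    rw [vmapAnd]
    by_cases h : i.val = 0
    · rw [dif_pos h]
      have h0 : i = ⟨0, Nat.succ_pos k⟩ := Fin.ext h
      have hstep := osum_step k a 0 (Nat.succ_pos k)
      rw [osum_zero, hsum] at hstep
      show (1 : ℝ) = a i * ωs i (Sum.inr true) + osum k a (i.val + 1)
      rw [hsrc, mul_one, h0]
      exact hstep
    · rw [dif_neg h]
      show osum k a ((i.val - 1) + 1) = a i * ωs i (Sum.inr true) + osum k a (i.val + 1)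
      have hiv : (i.val - 1) + 1 = i.val := by omega
      rw [hiv, hsrc, mul_one, osum_step k a i.val i.isLt]
  | .inr false =>
    have hsnk : ωs i (Sum.inr false) = 0 := ht i
    show andOmega k fs a ωs (vmapAnd k fs i (Sum.inr false)) = _
    rw [vmapAnd]
    by_cases h : i.val = k
    · rw [dif_pos h]
      show (0 : ℝ) = a i * ωs i (Sum.inr false) + osum k a (i.val + 1)
      rw [hsnk, mul_zero, h, osum_last]
      norm_num
    · rw [dif_neg h]
      show osum k a (i.val + 1) = a i * ωs i (Sum.inr false) + osum k a (i.val + 1)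
      rw [hsnk, mul_zero, zero_add]

/-- The `n`-th vertex on the spine of the series composition. -/
def andVert (n : ℕ) : (Formula.and k fs).Vert :=
  if n = 0 then .inr true
  else if h : n - 1 < k then .inl (.inr ⟨n - 1, h⟩) else .inr false

lemma vmapAnd_src (i : Fin (k + 1)) :
    vmapAnd k fs i (fs i).src = andVert k fs i.val := by
  show vmapAnd k fs i (Sum.inr true) = _
  rw [vmapAnd, andVert]
  by_cases h : i.val = 0
  · rw [dif_pos h, if_pos h]
  · rw [dif_neg h, if_neg h, dif_pos (by have := i.isLt; omega)]

lemma vmapAnd_snk (i : Fin (k + 1)) :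
    vmapAnd k fs i (fs i).snk = andVert k fs (i.val + 1) := by
  show vmapAnd k fs i (Sum.inr false) = _
  rw [vmapAnd, andVert]
  by_cases h : i.val = k
  · rw [dif_pos h, if_neg (by omega), dif_neg (by omega)]
  · rw [dif_neg h, if_neg (by omega), dif_pos (by omega)]
    simp

lemma andVert_zero : andVert k fs 0 = (Formula.and k fs).src := rfl

lemma andVert_last : andVert k fs (k + 1) = (Formula.and k fs).snk := by
  rw [andVert, if_neg (by omega), dif_neg (by omega)]
  rfl

lemma and_flow (θs : ∀ i, (fs i).Leaves → ℝ)
    (hf : ∀ i v, ∑ e, θs i e * ((if ((fs i).ends e).1 = v then (1:ℝ) else 0)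
        - (if ((fs i).ends e).2 = v then 1 else 0)) = tau (fs i).src (fs i).snk v)
    (v : (Formula.and k fs).Vert) :
    ∑ e : (Formula.and k fs).Leaves, θs e.1 e.2
        * ((if ((Formula.and k fs).ends e).1 = v then (1:ℝ) else 0)
          - (if ((Formula.and k fs).ends e).2 = v then 1 else 0))
      = tau (Formula.and k fs).src (Formula.and k fs).snk v := by
  rw [sum_leaves_and]
  have hinner : ∀ i : Fin (k + 1),
      (∑ e : (fs i).Leaves, θs i e
        * ((if vmapAnd k fs i ((fs i).ends e).1 = v then (1:ℝ) else 0)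
          - (if vmapAnd k fs i ((fs i).ends e).2 = v then 1 else 0)))
      = (if vmapAnd k fs i (fs i).src = v then (1:ℝ) else 0)
          - (if vmapAnd k fs i (fs i).snk = v then 1 else 0) := fun i =>
    flow_map (fs i).ends (fs i).src (fs i).snk (θs i) (hf i) (vmapAnd k fs i) v
  calc ∑ i : Fin (k + 1), ∑ e : (fs i).Leaves, θs i e
        * ((if ((Formula.and k fs).ends ⟨i, e⟩).1 = v then (1:ℝ) else 0)
          - (if ((Formula.and k fs).ends ⟨i, e⟩).2 = v then 1 else 0))
      = ∑ i : Fin (k + 1), ((if andVert k fs i.val = v then (1:ℝ) else 0)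
          - (if andVert k fs (i.val + 1) = v then 1 else 0)) := by
        refine Finset.sum_congr rfl fun i _ => ?_
        rw [← vmapAnd_src k fs i, ← vmapAnd_snk k fs i]
        exact hinner i
    _ = ∑ n ∈ Finset.range (k + 1), ((if andVert k fs n = v then (1:ℝ) else 0)
          - (if andVert k fs (n + 1) = v then 1 else 0)) :=
        Fin.sum_univ_eq_sum_range (fun n => (if andVert k fs n = v then (1:ℝ) else 0)
          - if andVert k fs (n + 1) = v then 1 else 0) (k + 1)
    _ = (if andVert k fs 0 = v then (1:ℝ) else 0)
          - (if andVert k fs (k + 1) = v then 1 else 0) :=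
        Finset.sum_range_sub' (fun n => if andVert k fs n = v then (1:ℝ) else 0) (k + 1)
    _ = tau (Formula.and k fs).src (Formula.and k fs).snk v := by
        rw [andVert_zero, andVert_last, tau, ind_comm ((Formula.and k fs).src) v,
          ind_comm ((Formula.and k fs).snk) v]

end AndGlue

section OrGlue

variable (k : ℕ) (fs : Fin (k + 1) → Formula N)

noncomputable def orOmega (ωs : ∀ i, (fs i).Vert → ℝ) :
    (Formula.or k fs).Vert → ℝ
  | .inl ⟨i, w⟩ => ωs i (.inl w)
  | .inr true => 1
  | .inr false => 0

lemma orOmega_vmap (ωs : ∀ i, (fs i).Vert → ℝ)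
    (hs : ∀ i, ωs i (fs i).src = 1) (ht : ∀ i, ωs i (fs i).snk = 0)
    (i : Fin (k + 1)) (w : (fs i).Vert) :
    orOmega k fs ωs (vmapOr k fs i w) = ωs i w := by
  match w with
  | .inl w => rfl
  | .inr true => exact (hs i).symm
  | .inr false => exact (ht i).symm

lemma or_flow (c : Fin (k + 1) → ℝ) (hc : ∑ i, c i = 1) (θs : ∀ i, (fs i).Leaves → ℝ)
    (hf : ∀ i v, ∑ e, θs i e * ((if ((fs i).ends e).1 = v then (1:ℝ) else 0)
        - (if ((fs i).ends e).2 = v then 1 else 0)) = tau (fs i).src (fs i).snk v)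
    (v : (Formula.or k fs).Vert) :
    ∑ e : (Formula.or k fs).Leaves, c e.1 * θs e.1 e.2
        * ((if ((Formula.or k fs).ends e).1 = v then (1:ℝ) else 0)
          - (if ((Formula.or k fs).ends e).2 = v then 1 else 0))
      = tau (Formula.or k fs).src (Formula.or k fs).snk v := by
  rw [sum_leaves_or]
  have hinner : ∀ i : Fin (k + 1),
      (∑ e : (fs i).Leaves, θs i e
        * ((if vmapOr k fs i ((fs i).ends e).1 = v then (1:ℝ) else 0)
          - (if vmapOr k fs i ((fs i).ends e).2 = v then 1 else 0)))
      = (if vmapOr k fs i (fs i).src = v then (1:ℝ) else 0)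
          - (if vmapOr k fs i (fs i).snk = v then 1 else 0) := fun i =>
    flow_map (fs i).ends (fs i).src (fs i).snk (θs i) (hf i) (vmapOr k fs i) v
  calc ∑ i : Fin (k + 1), ∑ e : (fs i).Leaves, c i * θs i e
        * ((if ((Formula.or k fs).ends ⟨i, e⟩).1 = v then (1:ℝ) else 0)
          - (if ((Formula.or k fs).ends ⟨i, e⟩).2 = v then 1 else 0))
      = ∑ i : Fin (k + 1), c i * ((if vmapOr k fs i (fs i).src = v then (1:ℝ) else 0)
          - (if vmapOr k fs i (fs i).snk = v then 1 else 0)) := by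
        refine Finset.sum_congr rfl fun i _ => ?_
        have step : ∑ e : (fs i).Leaves, c i * θs i e
            * ((if vmapOr k fs i ((fs i).ends e).1 = v then (1:ℝ) else 0)
              - (if vmapOr k fs i ((fs i).ends e).2 = v then 1 else 0))
          = c i * ((if vmapOr k fs i (fs i).src = v then (1:ℝ) else 0)
              - (if vmapOr k fs i (fs i).snk = v then 1 else 0)) := by
          rw [← hinner i, Finset.mul_sum]
          exact Finset.sum_congr rfl fun e _ => by ring
        exact step
    _ = tau (Formula.or k fs).src (Formula.or k fs).snk v := by
        have h1 : ∀ i : Fin (k + 1), vmapOr k fs i (fs i).src = (Formula.or k fs).src := fun i => rfl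
        have h2 : ∀ i : Fin (k + 1), vmapOr k fs i (fs i).snk = (Formula.or k fs).snk := fun i => rfl
        simp_rw [h1, h2]
        rw [← Finset.sum_mul, hc, one_mul, tau, ind_comm ((Formula.or k fs).src) v,
          ind_comm ((Formula.or k fs).snk) v]

end OrGlue

end Formula
end STConn
namespace STConn
namespace Formula

open Finset

variable {N : ℕ}

lemma sum_leaves_var {M : Type*} [AddCommMonoid M] {i : Fin N}
    (f : (Formula.var i).Leaves → M) : ∑ e, f e = f () := by
  letI : Unique (Formula.var i).Leaves := ⟨⟨()⟩, fun a => rfl⟩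
  exact Fintype.sum_unique f

lemma eval_and_iff (k : ℕ) (fs : Fin (k + 1) → Formula N) (x : Fin N → Bool) :
    (Formula.and k fs).eval x = true ↔ ∀ i, (fs i).eval x = true := by
  show (List.finRange (k + 1)).all (fun i => (fs i).eval x) = true ↔ _
  rw [List.all_eq_true]
  exact ⟨fun h i => h i (List.mem_finRange i), fun h i _ => h i⟩

lemma eval_or_iff (k : ℕ) (fs : Fin (k + 1) → Formula N) (x : Fin N → Bool) :
    (Formula.or k fs).eval x = true ↔ ∃ i, (fs i).eval x = true := by
  show (List.finRange (k + 1)).any (fun i => (fs i).eval x) = true ↔ _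
  rw [List.any_eq_true]
  exact ⟨fun ⟨i, _, h⟩ => ⟨i, h⟩, fun ⟨i, h⟩ => ⟨i, List.mem_finRange i, h⟩⟩

lemma wavg_le {k : ℕ} (c F : Fin (k + 1) → ℝ) (B : ℝ)
    (hc0 : ∀ i, 0 ≤ c i) (hc1 : ∑ i, c i = 1)
    (hF : ∀ i, F i ≤ B) (hF0 : ∀ i, 0 ≤ F i) :
    ∑ i, (c i) ^ 2 * F i ≤ B := by
  have hB : 0 ≤ B := le_trans (hF0 0) (hF 0)
  have h1 : ∀ i, c i ≤ 1 := fun i => by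
    have h2 := Finset.single_le_sum (f := c) (fun j _ => hc0 j) (Finset.mem_univ i)
    rw [hc1] at h2; exact h2
  calc ∑ i, (c i) ^ 2 * F i ≤ ∑ i, c i * B := by
        refine Finset.sum_le_sum fun i _ => ?_
        have q1 : (c i) ^ 2 * F i ≤ (c i) ^ 2 * B :=
          mul_le_mul_of_nonneg_left (hF i) (sq_nonneg _)
        have q2 : (c i) ^ 2 * B ≤ c i * B :=
          mul_le_mul_of_nonneg_right (by nlinarith [hc0 i, h1 i]) hB
        linarith
    _ = B := by rw [← Finset.sum_mul, hc1, one_mul]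

lemma sum_le_mul_pow {k l : ℕ} (hkl : k + 1 ≤ l) (F : Fin (k + 1) → ℝ) (B : ℝ)
    (hB : 0 ≤ B) (hF : ∀ i, F i ≤ B) : ∑ i, F i ≤ (l : ℝ) * B := by
  calc ∑ i, F i ≤ ∑ _i : Fin (k + 1), B := Finset.sum_le_sum fun i _ => hF i
    _ = ((k : ℝ) + 1) * B := by
        rw [Finset.sum_const, Finset.card_univ, Fintype.card_fin, nsmul_eq_mul]
        push_cast; ring
    _ ≤ (l : ℝ) * B := by
        have hc : ((k : ℝ) + 1) ≤ (l : ℝ) := by exact_mod_cast hkl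
        nlinarith

theorem build {l : ℕ} (φ : Formula N) : FanInLe l φ → ∀ x : Fin N → Bool,
    (φ.eval x = true → Nonempty (PData l φ x)) ∧
    (φ.eval x = false → Nonempty (NData l φ x)) := by
  induction φ with
  | var i =>
    intro _ x
    have hend : ∀ e : (Formula.var i).Leaves,
        (Formula.var i).ends e = (Sum.inr true, Sum.inr false) := fun _ => rfl
    have hflowvar : ∀ v, ∑ e : (Formula.var i).Leaves, (1:ℝ)
        * ((if ((Formula.var i).ends e).1 = v then (1:ℝ) else 0)
          - (if ((Formula.var i).ends e).2 = v then 1 else 0))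
        = tau (Formula.var i).src (Formula.var i).snk v := by
      intro v
      rw [sum_leaves_var]
      rcases v with v | b
      · exact v.elim
      · cases b <;> simp [tau, Formula.src, Formula.snk, Formula.ends]
    constructor
    · intro hx
      refine ⟨⟨fun _ => 1, Sum.elim (fun e => e.elim) (fun b => if b then 1 else 0), 1,
        ?_, one_pos, hflowvar, ?_, rfl, rfl, ?_, ?_, ?_⟩⟩
      · rw [sum_leaves_var]; norm_num
      · intro e he
        have h2 : x i = false := he
        rw [show x i = true from hx] at h2
        exact absurd h2 (by simp)
      · intro e _
        rw [hend e]; norm_num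
      · show (1:ℝ) ≤ (l:ℝ) ^ (0:ℕ)
        norm_num
      · rw [sum_leaves_var]
        show ((if true then (1:ℝ) else 0) - (if false then 1 else 0)) ^ 2 ≤ (l:ℝ) ^ (0:ℕ)
        norm_num
    · intro hx
      refine ⟨⟨fun _ => 1, Sum.elim (fun e => e.elim) (fun b => if b then 1 else 0), 1,
        ?_, one_pos, hflowvar, ?_, rfl, rfl, ?_, ?_, ?_⟩⟩
      · rw [sum_leaves_var]
        show (1:ℝ) = ((if true then (1:ℝ) else 0) - (if false then 1 else 0)) ^ 2
        norm_num
      · intro e he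
        have h2 : x i = true := he
        rw [show x i = false from hx] at h2
        exact absurd h2 (by simp)
      · intro e _
        rw [hend e]
        show (1:ℝ) = ((if true then (1:ℝ) else 0) - (if false then 1 else 0)) / 1
        norm_num
      · show (1:ℝ) ≤ (l:ℝ) ^ (0:ℕ)
        norm_num
      · rw [sum_leaves_var]
        show (1:ℝ) ^ 2 ≤ (l:ℝ) ^ (0:ℕ)
        norm_num
  | and k fs ih =>
    intro hl x
    obtain ⟨hkl, hli⟩ : (k + 1 ≤ l) ∧ ∀ i, FanInLe l (fs i) := hl
    have hl1 : (1 : ℝ) ≤ (l : ℝ) := by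
      have : 1 ≤ l := le_trans (Nat.le_add_left 1 k) hkl
      exact_mod_cast this
    have powA : ∀ i : Fin (k + 1), ((l : ℝ)) ^ (fs i).andDepth
        ≤ (l : ℝ) ^ (Finset.univ.sup fun i => (fs i).andDepth) := fun i =>
      pow_le_pow_right₀ hl1 (Finset.le_sup (f := fun i => (fs i).andDepth) (Finset.mem_univ i))
    have powO : ∀ i : Fin (k + 1), ((l : ℝ)) ^ (fs i).orDepth
        ≤ (l : ℝ) ^ (Finset.univ.sup fun i => (fs i).orDepth) := fun i =>
      pow_le_pow_right₀ hl1 (Finset.le_sup (f := fun i => (fs i).orDepth) (Finset.mem_univ i))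
    have dA : (Formula.and k fs).andDepth
        = (Finset.univ.sup fun i => (fs i).andDepth) + 1 := rfl
    have dO : (Formula.and k fs).orDepth
        = Finset.univ.sup fun i => (fs i).orDepth := rfl
    have hP : ∀ i, (fs i).eval x = true → PData l (fs i) x :=
      fun i h => ((ih i (hli i) x).1 h).some
    have hN : ∀ i, (fs i).eval x = false → NData l (fs i) x :=
      fun i h => ((ih i (hli i) x).2 h).some
    constructor
    · -- positive case: series composition of unit flows
      intro hx
      have hall : ∀ i, (fs i).eval x = true := (eval_and_iff k fs x).mp hx
      have P : ∀ i, PData l (fs i) x := fun i => hP i (hall i)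
      have hEpos : (0 : ℝ) < ∑ i, (P i).E :=
        Finset.sum_pos (fun i _ => (P i).hEpos) Finset.univ_nonempty
      have hEne : (∑ i, (P i).E) ≠ 0 := ne_of_gt hEpos
      have hsum : ∑ i, (P i).E / (∑ j', (P j').E) = 1 := by
        rw [← Finset.sum_div, div_self hEne]
      have hωs' : ∀ i, (P i).ω (fs i).src = 1 := fun i => (P i).hωs
      have hωt' : ∀ i, (P i).ω (fs i).snk = 0 := fun i => (P i).hωt
      have hedge : ∀ (i : Fin (k + 1)) (e : (fs i).Leaves),
          andOmega k fs (fun j => (P j).E / (∑ j', (P j').E)) (fun j => (P j).ω)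
              ((Formula.and k fs).ends ⟨i, e⟩).1
            - andOmega k fs (fun j => (P j).E / (∑ j', (P j').E)) (fun j => (P j).ω)
              ((Formula.and k fs).ends ⟨i, e⟩).2
          = ((P i).E / (∑ j', (P j').E))
              * ((P i).ω ((fs i).ends e).1 - (P i).ω ((fs i).ends e).2) := by
        intro i e
        have h1 : ((Formula.and k fs).ends ⟨i, e⟩).1 = vmapAnd k fs i ((fs i).ends e).1 := rfl
        have h2 : ((Formula.and k fs).ends ⟨i, e⟩).2 = vmapAnd k fs i ((fs i).ends e).2 := rfl
        rw [h1, h2, andOmega_vmap k fs _ _ hsum hωs' hωt',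
          andOmega_vmap k fs _ _ hsum hωs' hωt']
        ring
      refine ⟨⟨fun e => (P e.1).θ e.2,
        andOmega k fs (fun j => (P j).E / (∑ j', (P j').E)) (fun j => (P j).ω),
        ∑ i, (P i).E, ?_, hEpos, ?_, ?_, rfl, rfl, ?_, ?_, ?_⟩⟩
      · rw [sum_leaves_and]
        exact Finset.sum_congr rfl fun i _ => (P i).hE
      · exact and_flow k fs (fun i => (P i).θ) (fun i => (P i).hflow)
      · rintro ⟨i, e⟩ h
        beta_reduce
        exact (P i).hsupp e h
      · rintro ⟨i, e⟩ h
        beta_reduce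
        rw [hedge i e, (P i).hcomp e h, div_mul_div_comm,
          mul_comm (∑ j' : Fin (k + 1), (P j').E) ((P i).E),
          mul_div_mul_left _ _ (ne_of_gt (P i).hEpos)]
      · rw [dA, pow_succ, mul_comm]
        exact sum_le_mul_pow hkl (fun i => (P i).E)
          ((l : ℝ) ^ (Finset.univ.sup fun i => (fs i).andDepth))
          (by positivity) fun i => le_trans (P i).hEle (powA i)
      · rw [dO, sum_leaves_and]
        have hsq : ∀ i : Fin (k + 1), (∑ e : (fs i).Leaves,
            (andOmega k fs (fun j => (P j).E / (∑ j', (P j').E)) (fun j => (P j).ω)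
              ((Formula.and k fs).ends ⟨i, e⟩).1
            - andOmega k fs (fun j => (P j).E / (∑ j', (P j').E)) (fun j => (P j).ω)
              ((Formula.and k fs).ends ⟨i, e⟩).2) ^ 2)
            = ((P i).E / (∑ j', (P j').E)) ^ 2
              * ∑ e, ((P i).ω ((fs i).ends e).1 - (P i).ω ((fs i).ends e).2) ^ 2 := by
          intro i
          rw [Finset.mul_sum]
          refine Finset.sum_congr rfl fun e _ => ?_
          rw [hedge i e]; ring
        rw [Finset.sum_congr rfl fun i _ => hsq i]
        exact wavg_le (fun i => (P i).E / (∑ j', (P j').E))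
          (fun i => ∑ e, ((P i).ω ((fs i).ends e).1 - (P i).ω ((fs i).ends e).2) ^ 2)
          ((l : ℝ) ^ (Finset.univ.sup fun i => (fs i).orDepth))
          (fun i => div_nonneg (le_of_lt (P i).hEpos) (le_of_lt hEpos)) hsum
          (fun i => le_trans (P i).hFle (powO i)) (fun i => by positivity)
    · -- negative case: potential drop spread over the false children
      intro hx
      have hex : ∃ j, (fs j).eval x = false := by
        by_contra hc
        push_neg at hc
        have hall : ∀ i, (fs i).eval x = true := fun i => by
          cases hbe : (fs i).eval x
          · exact absurd hbe (hc i)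
          · rfl
        rw [(eval_and_iff k fs x).mpr hall] at hx
        exact absurd hx (by simp)
      obtain ⟨j, hj⟩ := hex
      obtain ⟨θi, ωi, R, hspecF, hspecT⟩ :
          ∃ (θi : ∀ i, (fs i).Leaves → ℝ) (ωi : ∀ i, (fs i).Vert → ℝ)
            (R : Fin (k + 1) → ℝ),
            (∀ i (h : (fs i).eval x = false),
              θi i = (hN i h).θ ∧ ωi i = (hN i h).ω ∧ R i = (hN i h).D) ∧
            (∀ i (h : (fs i).eval x = true),
              θi i = (hP i h).θ ∧ ωi i = (hP i h).ω ∧ R i = 0) := by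
        classical
        refine ⟨fun i => if h : (fs i).eval x = false then (hN i h).θ
            else (hP i (by simpa using h)).θ,
          fun i => if h : (fs i).eval x = false then (hN i h).ω
            else (hP i (by simpa using h)).ω,
          fun i => if h : (fs i).eval x = false then (hN i h).D else 0,
          fun i h => ⟨dif_pos h, dif_pos h, dif_pos h⟩, fun i h => ?_⟩
        have h' : ¬ (fs i).eval x = false := by simp [h]
        exact ⟨dif_neg h', dif_neg h', dif_neg h'⟩
      have hRposF : ∀ i (h : (fs i).eval x = false), 0 < R i := fun i h => by
        rw [(hspecF i h).2.2]; exact (hN i h).hDpos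
      have hRinv_nn : ∀ i, 0 ≤ (R i)⁻¹ := by
        intro i
        cases hbe : (fs i).eval x
        · exact inv_nonneg.mpr (le_of_lt (hRposF i hbe))
        · rw [(hspecT i hbe).2.2]; simp
      have hSpos : 0 < ∑ i, (R i)⁻¹ :=
        Finset.sum_pos' (fun i _ => hRinv_nn i)
          ⟨j, Finset.mem_univ j, inv_pos.mpr (hRposF j hj)⟩
      have hSne : (∑ i, (R i)⁻¹) ≠ 0 := ne_of_gt hSpos
      have hasum : ∑ i, (∑ i', (R i')⁻¹)⁻¹ * (R i)⁻¹ = 1 := by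
        rw [← Finset.mul_sum, inv_mul_cancel₀ hSne]
      have hωis : ∀ i, ωi i (fs i).src = 1 := fun i => by
        cases hbe : (fs i).eval x
        · rw [(hspecF i hbe).2.1]; exact (hN i hbe).hωs
        · rw [(hspecT i hbe).2.1]; exact (hP i hbe).hωs
      have hωit : ∀ i, ωi i (fs i).snk = 0 := fun i => by
        cases hbe : (fs i).eval x
        · rw [(hspecF i hbe).2.1]; exact (hN i hbe).hωt
        · rw [(hspecT i hbe).2.1]; exact (hP i hbe).hωt
      have hθflow : ∀ i v, ∑ e, θi i e * ((if ((fs i).ends e).1 = v then (1:ℝ) else 0)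
          - (if ((fs i).ends e).2 = v then 1 else 0)) = tau (fs i).src (fs i).snk v := by
        intro i v
        cases hbe : (fs i).eval x
        · rw [(hspecF i hbe).1]; exact (hN i hbe).hflow v
        · rw [(hspecT i hbe).1]; exact (hP i hbe).hflow v
      have hedge : ∀ (i : Fin (k + 1)) (e : (fs i).Leaves),
          andOmega k fs (fun j' => (∑ i', (R i')⁻¹)⁻¹ * (R j')⁻¹) ωi
              ((Formula.and k fs).ends ⟨i, e⟩).1
            - andOmega k fs (fun j' => (∑ i', (R i')⁻¹)⁻¹ * (R j')⁻¹) ωi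
              ((Formula.and k fs).ends ⟨i, e⟩).2
          = ((∑ i', (R i')⁻¹)⁻¹ * (R i)⁻¹)
              * (ωi i ((fs i).ends e).1 - ωi i ((fs i).ends e).2) := by
        intro i e
        have h1 : ((Formula.and k fs).ends ⟨i, e⟩).1 = vmapAnd k fs i ((fs i).ends e).1 := rfl
        have h2 : ((Formula.and k fs).ends ⟨i, e⟩).2 = vmapAnd k fs i ((fs i).ends e).2 := rfl
        rw [h1, h2, andOmega_vmap k fs _ _ hasum hωis hωit,
          andOmega_vmap k fs _ _ hasum hωis hωit]
        ring
      refine ⟨⟨fun e => θi e.1 e.2,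
        andOmega k fs (fun j' => (∑ i', (R i')⁻¹)⁻¹ * (R j')⁻¹) ωi,
        (∑ i', (R i')⁻¹)⁻¹, ?_, inv_pos.mpr hSpos, ?_, ?_, rfl, rfl, ?_, ?_, ?_⟩⟩
      · -- hD
        rw [sum_leaves_and]
        have hterm : ∀ i : Fin (k + 1), (∑ e : (fs i).Leaves,
            (andOmega k fs (fun j' => (∑ i', (R i')⁻¹)⁻¹ * (R j')⁻¹) ωi
              ((Formula.and k fs).ends ⟨i, e⟩).1
            - andOmega k fs (fun j' => (∑ i', (R i')⁻¹)⁻¹ * (R j')⁻¹) ωi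
              ((Formula.and k fs).ends ⟨i, e⟩).2) ^ 2)
            = ((∑ i', (R i')⁻¹)⁻¹) ^ 2 * (R i)⁻¹ := by
          intro i
          have hstep : ∀ e : (fs i).Leaves, (andOmega k fs
              (fun j' => (∑ i', (R i')⁻¹)⁻¹ * (R j')⁻¹) ωi
              ((Formula.and k fs).ends ⟨i, e⟩).1
            - andOmega k fs (fun j' => (∑ i', (R i')⁻¹)⁻¹ * (R j')⁻¹) ωi
              ((Formula.and k fs).ends ⟨i, e⟩).2) ^ 2
            = ((∑ i', (R i')⁻¹)⁻¹ * (R i)⁻¹) ^ 2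
              * (ωi i ((fs i).ends e).1 - ωi i ((fs i).ends e).2) ^ 2 := by
            intro e; rw [hedge i e]; ring
          rw [Finset.sum_congr rfl fun e _ => hstep e, ← Finset.mul_sum]
          cases hbe : (fs i).eval x
          · rw [(hspecF i hbe).2.1, ← (hN i hbe).hD, ← (hspecF i hbe).2.2]
            have hR : R i ≠ 0 := ne_of_gt (hRposF i hbe)
            have hq : ((∑ i', (R i')⁻¹)⁻¹ * (R i)⁻¹) ^ 2 * R i
                = ((∑ i', (R i')⁻¹)⁻¹) ^ 2 * ((R i)⁻¹ * ((R i)⁻¹ * R i)) := by ring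
            rw [hq, inv_mul_cancel₀ hR, mul_one]
          · rw [(hspecT i hbe).2.2, inv_zero]
            ring
        rw [Finset.sum_congr rfl fun i _ => hterm i, ← Finset.mul_sum,
          pow_two, mul_assoc, inv_mul_cancel₀ hSne, mul_one]
      · -- hflow
        exact and_flow k fs θi hθflow
      · -- hgood
        rintro ⟨i, e⟩ h
        beta_reduce
        rw [hedge i e]
        cases hbe : (fs i).eval x
        · rw [(hspecF i hbe).2.1, (hN i hbe).hgood e h, mul_zero]
        · rw [(hspecT i hbe).2.2, inv_zero, mul_zero, zero_mul]
      · -- hbad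
        rintro ⟨i, e⟩ h
        beta_reduce
        rw [hedge i e]
        have hSinv : ((∑ i', (R i')⁻¹) : ℝ)⁻¹ ≠ 0 := inv_ne_zero hSne
        cases hbe : (fs i).eval x
        · rw [(hspecF i hbe).1, (hN i hbe).hbad e h, (hspecF i hbe).2.1,
            ← (hspecF i hbe).2.2]
          have hR : R i ≠ 0 := ne_of_gt (hRposF i hbe)
          rw [div_eq_div_iff hR hSinv]
          have hq : (∑ i', (R i')⁻¹)⁻¹ * (R i)⁻¹
              * ((hN i hbe).ω ((fs i).ends e).1 - (hN i hbe).ω ((fs i).ends e).2) * R i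
              = (∑ i', (R i')⁻¹)⁻¹
              * ((hN i hbe).ω ((fs i).ends e).1 - (hN i hbe).ω ((fs i).ends e).2)
              * ((R i)⁻¹ * R i) := by ring
          rw [hq, inv_mul_cancel₀ hR, mul_one]
          ring
        · rw [(hspecT i hbe).1, (hP i hbe).hsupp e h, (hspecT i hbe).2.2, inv_zero]
          simp
      · -- hDle
        rw [dO]
        have h1 : (R j)⁻¹ ≤ ∑ i', (R i')⁻¹ :=
          Finset.single_le_sum (fun i _ => hRinv_nn i) (Finset.mem_univ j)
        have h2 : (∑ i', (R i')⁻¹)⁻¹ ≤ ((R j)⁻¹)⁻¹ :=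
          inv_anti₀ (inv_pos.mpr (hRposF j hj)) h1
        rw [inv_inv] at h2
        refine le_trans h2 (le_trans ?_ (powO j))
        rw [(hspecF j hj).2.2]
        exact (hN j hj).hDle
      · -- hTle
        rw [dA, pow_succ, mul_comm, sum_leaves_and]
        refine sum_le_mul_pow hkl _
          ((l : ℝ) ^ (Finset.univ.sup fun i => (fs i).andDepth))
          (by positivity) fun i => ?_
        refine le_trans ?_ (powA i)
        show ∑ e : (fs i).Leaves, θi i e ^ 2 ≤ (l : ℝ) ^ (fs i).andDepth
        cases hbe : (fs i).eval x
        · rw [(hspecF i hbe).1]; exact (hN i hbe).hTle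
        · rw [(hspecT i hbe).1, ← (hP i hbe).hE]; exact (hP i hbe).hEle
  | or k fs ih =>
    intro hl x
    obtain ⟨hkl, hli⟩ : (k + 1 ≤ l) ∧ ∀ i, FanInLe l (fs i) := hl
    have hl1 : (1 : ℝ) ≤ (l : ℝ) := by
      have : 1 ≤ l := le_trans (Nat.le_add_left 1 k) hkl
      exact_mod_cast this
    have powA : ∀ i : Fin (k + 1), ((l : ℝ)) ^ (fs i).andDepth
        ≤ (l : ℝ) ^ (Finset.univ.sup fun i => (fs i).andDepth) := fun i =>
      pow_le_pow_right₀ hl1 (Finset.le_sup (f := fun i => (fs i).andDepth) (Finset.mem_univ i))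
    have powO : ∀ i : Fin (k + 1), ((l : ℝ)) ^ (fs i).orDepth
        ≤ (l : ℝ) ^ (Finset.univ.sup fun i => (fs i).orDepth) := fun i =>
      pow_le_pow_right₀ hl1 (Finset.le_sup (f := fun i => (fs i).orDepth) (Finset.mem_univ i))
    have dA : (Formula.or k fs).andDepth
        = Finset.univ.sup fun i => (fs i).andDepth := rfl
    have dO : (Formula.or k fs).orDepth
        = (Finset.univ.sup fun i => (fs i).orDepth) + 1 := rfl
    have hP : ∀ i, (fs i).eval x = true → PData l (fs i) x :=
      fun i h => ((ih i (hli i) x).1 h).some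
    have hN : ∀ i, (fs i).eval x = false → NData l (fs i) x :=
      fun i h => ((ih i (hli i) x).2 h).some
    constructor
    · -- positive case: parallel composition, flow split across true children
      intro hx
      obtain ⟨j, hj⟩ := (eval_or_iff k fs x).mp hx
      obtain ⟨θi, ωi, R, hspecT, hspecF⟩ :
          ∃ (θi : ∀ i, (fs i).Leaves → ℝ) (ωi : ∀ i, (fs i).Vert → ℝ)
            (R : Fin (k + 1) → ℝ),
            (∀ i (h : (fs i).eval x = true),
              θi i = (hP i h).θ ∧ ωi i = (hP i h).ω ∧ R i = (hP i h).E) ∧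
            (∀ i (h : (fs i).eval x = false),
              θi i = (hN i h).θ ∧ ωi i = (hN i h).ω ∧ R i = 0) := by
        classical
        refine ⟨fun i => if h : (fs i).eval x = true then (hP i h).θ
            else (hN i (by simpa using h)).θ,
          fun i => if h : (fs i).eval x = true then (hP i h).ω
            else (hN i (by simpa using h)).ω,
          fun i => if h : (fs i).eval x = true then (hP i h).E else 0,
          fun i h => ⟨dif_pos h, dif_pos h, dif_pos h⟩, fun i h => ?_⟩
        have h' : ¬ (fs i).eval x = true := by simp [h]
        exact ⟨dif_neg h', dif_neg h', dif_neg h'⟩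
      have hRposT : ∀ i (h : (fs i).eval x = true), 0 < R i := fun i h => by
        rw [(hspecT i h).2.2]; exact (hP i h).hEpos
      have hRinv_nn : ∀ i, 0 ≤ (R i)⁻¹ := by
        intro i
        cases hbe : (fs i).eval x
        · rw [(hspecF i hbe).2.2]; simp
        · exact inv_nonneg.mpr (le_of_lt (hRposT i hbe))
      have hSpos : 0 < ∑ i, (R i)⁻¹ :=
        Finset.sum_pos' (fun i _ => hRinv_nn i)
          ⟨j, Finset.mem_univ j, inv_pos.mpr (hRposT j hj)⟩
      have hSne : (∑ i, (R i)⁻¹) ≠ 0 := ne_of_gt hSpos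
      have hcsum : ∑ i, (∑ i', (R i')⁻¹)⁻¹ * (R i)⁻¹ = 1 := by
        rw [← Finset.mul_sum, inv_mul_cancel₀ hSne]
      have hωis : ∀ i, ωi i (fs i).src = 1 := fun i => by
        cases hbe : (fs i).eval x
        · rw [(hspecF i hbe).2.1]; exact (hN i hbe).hωs
        · rw [(hspecT i hbe).2.1]; exact (hP i hbe).hωs
      have hωit : ∀ i, ωi i (fs i).snk = 0 := fun i => by
        cases hbe : (fs i).eval x
        · rw [(hspecF i hbe).2.1]; exact (hN i hbe).hωt
        · rw [(hspecT i hbe).2.1]; exact (hP i hbe).hωt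
      have hθflow : ∀ i v, ∑ e, θi i e * ((if ((fs i).ends e).1 = v then (1:ℝ) else 0)
          - (if ((fs i).ends e).2 = v then 1 else 0)) = tau (fs i).src (fs i).snk v := by
        intro i v
        cases hbe : (fs i).eval x
        · rw [(hspecF i hbe).1]; exact (hN i hbe).hflow v
        · rw [(hspecT i hbe).1]; exact (hP i hbe).hflow v
      have hedge : ∀ (i : Fin (k + 1)) (e : (fs i).Leaves),
          orOmega k fs ωi ((Formula.or k fs).ends ⟨i, e⟩).1
            - orOmega k fs ωi ((Formula.or k fs).ends ⟨i, e⟩).2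
          = ωi i ((fs i).ends e).1 - ωi i ((fs i).ends e).2 := by
        intro i e
        have h1 : ((Formula.or k fs).ends ⟨i, e⟩).1 = vmapOr k fs i ((fs i).ends e).1 := rfl
        have h2 : ((Formula.or k fs).ends ⟨i, e⟩).2 = vmapOr k fs i ((fs i).ends e).2 := rfl
        rw [h1, h2, orOmega_vmap k fs ωi hωis hωit, orOmega_vmap k fs ωi hωis hωit]
      refine ⟨⟨fun e => ((∑ i', (R i')⁻¹)⁻¹ * (R e.1)⁻¹) * θi e.1 e.2,
        orOmega k fs ωi, (∑ i', (R i')⁻¹)⁻¹, ?_, inv_pos.mpr hSpos, ?_, ?_,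
        rfl, rfl, ?_, ?_, ?_⟩⟩
      · -- hE
        rw [sum_leaves_or]
        have hterm : ∀ i : Fin (k + 1), (∑ e : (fs i).Leaves,
            (((∑ i', (R i')⁻¹)⁻¹ * (R i)⁻¹) * θi i e) ^ 2)
            = ((∑ i', (R i')⁻¹)⁻¹) ^ 2 * (R i)⁻¹ := by
          intro i
          have : ∀ e : (fs i).Leaves, (((∑ i', (R i')⁻¹)⁻¹ * (R i)⁻¹) * θi i e) ^ 2
              = ((∑ i', (R i')⁻¹)⁻¹ * (R i)⁻¹) ^ 2 * θi i e ^ 2 := fun e => by ring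
          rw [Finset.sum_congr rfl fun e _ => this e, ← Finset.mul_sum]
          cases hbe : (fs i).eval x
          · rw [(hspecF i hbe).2.2, inv_zero]
            ring
          · rw [(hspecT i hbe).1, ← (hP i hbe).hE, ← (hspecT i hbe).2.2]
            have hR : R i ≠ 0 := ne_of_gt (hRposT i hbe)
            have hq : ((∑ i', (R i')⁻¹)⁻¹ * (R i)⁻¹) ^ 2 * R i
                = ((∑ i', (R i')⁻¹)⁻¹) ^ 2 * ((R i)⁻¹ * ((R i)⁻¹ * R i)) := by ring
            rw [hq, inv_mul_cancel₀ hR, mul_one]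
        rw [Finset.sum_congr rfl fun i _ => hterm i, ← Finset.mul_sum,
          pow_two, mul_assoc, inv_mul_cancel₀ hSne, mul_one]
      · -- hflow
        exact or_flow k fs (fun i => (∑ i', (R i')⁻¹)⁻¹ * (R i)⁻¹) hcsum θi hθflow
      · -- hsupp
        rintro ⟨i, e⟩ h
        beta_reduce
        cases hbe : (fs i).eval x
        · rw [(hspecF i hbe).2.2, inv_zero, mul_zero, zero_mul]
        · rw [(hspecT i hbe).1, (hP i hbe).hsupp e h, mul_zero]
      · -- hcomp
        rintro ⟨i, e⟩ h
        beta_reduce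
        rw [hedge i e]
        have hSinv : ((∑ i', (R i')⁻¹) : ℝ)⁻¹ ≠ 0 := inv_ne_zero hSne
        cases hbe : (fs i).eval x
        · rw [(hspecF i hbe).2.1, (hN i hbe).hgood e h, (hspecF i hbe).2.2, inv_zero]
          simp
        · rw [(hspecT i hbe).2.1, (hP i hbe).hcomp e h, ← (hspecT i hbe).1,
            ← (hspecT i hbe).2.2]
          have hR : R i ≠ 0 := ne_of_gt (hRposT i hbe)
          rw [div_eq_div_iff hR hSinv]
          have hq : (∑ i', (R i')⁻¹)⁻¹ * (R i)⁻¹ * θi i e * R i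
              = (∑ i', (R i')⁻¹)⁻¹ * θi i e * ((R i)⁻¹ * R i) := by ring
          rw [hq, inv_mul_cancel₀ hR, mul_one]
          ring
      · -- hEle
        rw [dA]
        have h1 : (R j)⁻¹ ≤ ∑ i', (R i')⁻¹ :=
          Finset.single_le_sum (fun i _ => hRinv_nn i) (Finset.mem_univ j)
        have h2 : (∑ i', (R i')⁻¹)⁻¹ ≤ ((R j)⁻¹)⁻¹ :=
          inv_anti₀ (inv_pos.mpr (hRposT j hj)) h1
        rw [inv_inv] at h2
        refine le_trans h2 (le_trans ?_ (powA j))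
        rw [(hspecT j hj).2.2]
        exact (hP j hj).hEle
      · -- hFle
        rw [dO, pow_succ, mul_comm, sum_leaves_or]
        refine sum_le_mul_pow hkl _
          ((l : ℝ) ^ (Finset.univ.sup fun i => (fs i).orDepth))
          (by positivity) fun i => ?_
        have hstep : (∑ e : (fs i).Leaves,
            (orOmega k fs ωi ((Formula.or k fs).ends ⟨i, e⟩).1
              - orOmega k fs ωi ((Formula.or k fs).ends ⟨i, e⟩).2) ^ 2)
            = ∑ e, (ωi i ((fs i).ends e).1 - ωi i ((fs i).ends e).2) ^ 2 :=
          Finset.sum_congr rfl fun e _ => by rw [hedge i e]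
        rw [hstep]
        refine le_trans ?_ (powO i)
        cases hbe : (fs i).eval x
        · rw [(hspecF i hbe).2.1, ← (hN i hbe).hD]; exact (hN i hbe).hDle
        · rw [(hspecT i hbe).2.1]; exact (hP i hbe).hFle
    · -- negative case: parallel composition of cut potentials
      intro hx
      have hallF : ∀ i, (fs i).eval x = false := by
        intro i
        cases hbe : (fs i).eval x
        · rfl
        · exfalso
          rw [(eval_or_iff k fs x).mpr ⟨i, hbe⟩] at hx
          exact absurd hx (by simp)
      have Nn : ∀ i, NData l (fs i) x := fun i => hN i (hallF i)
      have hDpos : (0 : ℝ) < ∑ i, (Nn i).D :=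
        Finset.sum_pos (fun i _ => (Nn i).hDpos) Finset.univ_nonempty
      have hDne : (∑ i, (Nn i).D) ≠ 0 := ne_of_gt hDpos
      have hcsum : ∑ i, (Nn i).D / (∑ j', (Nn j').D) = 1 := by
        rw [← Finset.sum_div, div_self hDne]
      have hωis : ∀ i, (Nn i).ω (fs i).src = 1 := fun i => (Nn i).hωs
      have hωit : ∀ i, (Nn i).ω (fs i).snk = 0 := fun i => (Nn i).hωt
      have hedge : ∀ (i : Fin (k + 1)) (e : (fs i).Leaves),
          orOmega k fs (fun i' => (Nn i').ω) ((Formula.or k fs).ends ⟨i, e⟩).1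
            - orOmega k fs (fun i' => (Nn i').ω) ((Formula.or k fs).ends ⟨i, e⟩).2
          = (Nn i).ω ((fs i).ends e).1 - (Nn i).ω ((fs i).ends e).2 := by
        intro i e
        have h1 : ((Formula.or k fs).ends ⟨i, e⟩).1 = vmapOr k fs i ((fs i).ends e).1 := rfl
        have h2 : ((Formula.or k fs).ends ⟨i, e⟩).2 = vmapOr k fs i ((fs i).ends e).2 := rfl
        rw [h1, h2, orOmega_vmap k fs _ hωis hωit, orOmega_vmap k fs _ hωis hωit]
      refine ⟨⟨fun e => ((Nn e.1).D / (∑ j', (Nn j').D)) * (Nn e.1).θ e.2,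
        orOmega k fs (fun i' => (Nn i').ω), ∑ i, (Nn i).D, ?_, hDpos, ?_, ?_,
        rfl, rfl, ?_, ?_, ?_⟩⟩
      · -- hD
        rw [sum_leaves_or]
        refine Finset.sum_congr rfl fun i _ => ?_
        rw [(Nn i).hD]
        refine Finset.sum_congr rfl fun e _ => ?_
        beta_reduce
        rw [hedge i e]
      · -- hflow
        exact or_flow k fs (fun i => (Nn i).D / (∑ j', (Nn j').D)) hcsum
          (fun i => (Nn i).θ) (fun i => (Nn i).hflow)
      · -- hgood
        rintro ⟨i, e⟩ h
        rw [hedge i e]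
        exact (Nn i).hgood e h
      · -- hbad
        rintro ⟨i, e⟩ h
        beta_reduce
        rw [hedge i e, (Nn i).hbad e h, div_mul_div_comm,
          mul_comm (∑ j' : Fin (k + 1), (Nn j').D) ((Nn i).D),
          mul_div_mul_left _ _ (ne_of_gt (Nn i).hDpos)]
      · -- hDle
        rw [dO, pow_succ, mul_comm]
        exact sum_le_mul_pow hkl (fun i => (Nn i).D)
          ((l : ℝ) ^ (Finset.univ.sup fun i => (fs i).orDepth))
          (by positivity) fun i => le_trans (Nn i).hDle (powO i)
      · -- hTle
        rw [dA, sum_leaves_or]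
        have hterm : ∀ i : Fin (k + 1), (∑ e : (fs i).Leaves,
            (((Nn i).D / (∑ j', (Nn j').D)) * (Nn i).θ e) ^ 2)
            = ((Nn i).D / (∑ j', (Nn j').D)) ^ 2 * ∑ e, (Nn i).θ e ^ 2 := by
          intro i
          rw [Finset.mul_sum]
          exact Finset.sum_congr rfl fun e _ => by ring
        rw [Finset.sum_congr rfl fun i _ => hterm i]
        exact wavg_le (fun i => (Nn i).D / (∑ j', (Nn j').D))
          (fun i => ∑ e, (Nn i).θ e ^ 2)
          ((l : ℝ) ^ (Finset.univ.sup fun i => (fs i).andDepth))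
          (fun i => div_nonneg (le_of_lt (Nn i).hDpos) (le_of_lt hDpos)) hcsum
          (fun i => le_trans (Nn i).hTle (powA i)) (fun i => by positivity)

end Formula
end STConn
namespace STConn
namespace Formula

lemma ofReal_half_le {l d : ℕ} {T : ℝ} (h : T ≤ (l : ℝ) ^ d) :
    ENNReal.ofReal (T / 2) ≤ (l : ℝ≥0∞) ^ d / 2 := by
  have h2 : ENNReal.ofReal (T / 2) ≤ ENNReal.ofReal ((l : ℝ) ^ d / 2) :=
    ENNReal.ofReal_le_ofReal (by linarith)
  refine h2.trans (le_of_eq ?_)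
  rw [ENNReal.ofReal_div_of_pos (by norm_num), ENNReal.ofReal_pow (by positivity),
    ENNReal.ofReal_natCast]
  norm_num

lemma ofReal_two_mul_le {l d : ℕ} {F : ℝ} (h : F ≤ (l : ℝ) ^ d) :
    ENNReal.ofReal (2 * F) ≤ 2 * (l : ℝ≥0∞) ^ d := by
  have h2 : ENNReal.ofReal (2 * F) ≤ ENNReal.ofReal (2 * (l : ℝ) ^ d) :=
    ENNReal.ofReal_le_ofReal (by linarith)
  refine h2.trans (le_of_eq ?_)
  rw [ENNReal.ofReal_mul (by norm_num), ENNReal.ofReal_pow (by positivity),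
    ENNReal.ofReal_natCast]
  norm_num

end Formula
end STConn

open scoped ENNReal in
open STConn Formula in
/-- For an AND-OR formula `φ` with fan-in at most `l`, `∧`-depth `d_∧` and
`∨`-depth `d_∨`, the unit-weight `st`-connectivity span program `P_{G_φ}`
satisfies `W̃₊(P_{G_φ}) ≤ (1/2)·l^{d_∧}` and `W̃₋(P_{G_φ}) ≤ 2·l^{d_∨}`. -/
theorem stmt_18 {N : ℕ} (φ : Formula N) (l : ℕ) (hl : FanInLe l φ) :
    (⨆ x : Fin N → Bool, φ.apPosSize x) ≤ (l : ℝ≥0∞) ^ φ.andDepth / 2 ∧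
    (⨆ x : Fin N → Bool, φ.apNegSize x) ≤ 2 * (l : ℝ≥0∞) ^ φ.orDepth := by
  constructor
  · refine iSup_le fun x => ?_
    cases hev : φ.eval x with
    | true =>
      obtain ⟨P⟩ := (build φ hl x).1 hev
      exact le_trans (posCase_bounds φ x P).1 (ofReal_half_le P.hEle)
    | false =>
      obtain ⟨Nd⟩ := (build φ hl x).2 hev
      exact le_trans (negCase_bounds φ x Nd).1 (ofReal_half_le Nd.hTle)
  · refine iSup_le fun x => ?_
    cases hev : φ.eval x with
    | true =>
      obtain ⟨P⟩ := (build φ hl x).1 hev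
      exact le_trans (posCase_bounds φ x P).2 (ofReal_two_mul_le P.hFle)
    | false =>
      obtain ⟨Nd⟩ := (build φ hl x).2 hev
      exact le_trans (negCase_bounds φ x Nd).2 (ofReal_two_mul_le Nd.hDle)
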